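/- Let m, n be integers with |m| = |n| ≥ 2 and let Λ ≤ BS(m,n) be a subgroup of finite phenotype, i.e. such that the index [⟨b⟩ : ⟨b⟩ ∩ Λ] is finite. Then the right-translation action of BS(m,n) on the coset space Λ\BS(m,n) is not faithful. -/

import Mathlib

/-- The single Baumslag–Solitar relator `t b^m t⁻¹ b^{-n}` in the free group on two
generators (`false ↦ b`, `true ↦ t`). -/
def BSrel (m n : ℤ) : Set (FreeGroup Bool) :=
  {FreeGroup.of true * FreeGroup.of false ^ m * (FreeGroup.of true)⁻¹ *
    (FreeGroup.of false ^ n)⁻¹}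

/-- The Baumslag–Solitar group `BS(m,n) = ⟨b, t ∣ t b^m t⁻¹ = b^n⟩`. -/
abbrev BS (m n : ℤ) : Type := PresentedGroup (BSrel m n)

/-- The generator `b` of `BS(m,n)`. -/
def bGen (m n : ℤ) : BS m n := PresentedGroup.of false

/-- The space of right cosets `Λ\Γ`. -/
def rQuot {Γ : Type*} [Group Γ] (Λ : Subgroup Γ) : Type _ :=
  Quotient (QuotientGroup.rightRel Λ)

/-- The right-translation action of `Γ` on the right coset space `Λ\Γ`:
`Λx · γ = Λxγ`. -/
def rAct {Γ : Type*} [Group Γ] (Λ : Subgroup Γ) (γ : Γ) : rQuot Λ → rQuot Λ :=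
  Quotient.map' (fun x => x * γ) (by
    intro x y h
    rw [QuotientGroup.rightRel_apply] at h ⊢
    have key : y * γ * (x * γ)⁻¹ = y * x⁻¹ := by group
    rw [key]; exact h)

lemma dih_inv_r (i : ZMod 0) : (DihedralGroup.r i)⁻¹ = DihedralGroup.r (-i) := rfl

lemma dih_inv_sr (i : ZMod 0) : (DihedralGroup.sr i)⁻¹ = DihedralGroup.sr i := rfl

lemma dih_r_one_zpow (z : ℤ) :
    (DihedralGroup.r 1 : DihedralGroup 0) ^ z = DihedralGroup.r z := by
  induction z using Int.induction_on with
  | zero => rw [zpow_zero, DihedralGroup.one_def]; rfl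
  | succ k ih =>
      rw [zpow_add_one, ih]; exact DihedralGroup.r_mul_r _ _
  | pred k ih =>
      rw [zpow_sub_one, ih, dih_inv_r]; exact DihedralGroup.r_mul_r _ _

/-- If `|m| = |n| ≥ 2` and `Λ ≤ BS(m,n)` has finite phenotype, i.e. the index
`[⟨b⟩ : ⟨b⟩ ∩ Λ]` is finite, then the right-translation action of `BS(m,n)` on
`Λ\BS(m,n)` is not faithful. -/
theorem not_faithful_of_finite_phenotype (m n : ℤ) (heq : m.natAbs = n.natAbs)
    (h2 : 2 ≤ m.natAbs) (Λ : Subgroup (BS m n))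
    (hfin : Subgroup.relIndex Λ (Subgroup.zpowers (bGen m n)) ≠ 0) :
    ∃ γ : BS m n, γ ≠ 1 ∧ ∀ x : rQuot Λ, rAct Λ γ x = x := by
  classical
  set b : BS m n := bGen m n with hbdef
  set t : BS m n := PresentedGroup.of (rels := BSrel m n) true with htdef
  have hm0 : m ≠ 0 := by
    intro h
    rw [h] at h2
    simp at h2
  have hmn : n = m ∨ n = -m := by
    rcases Int.natAbs_eq_natAbs_iff.mp heq.symm with h | h
    · exact Or.inl h
    · exact Or.inr h
  -- the defining relation
  have trel : t * b ^ m * t⁻¹ = b ^ n := by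
    have h1 : PresentedGroup.mk (BSrel m n)
        (FreeGroup.of true * FreeGroup.of false ^ m * (FreeGroup.of true)⁻¹ *
          (FreeGroup.of false ^ n)⁻¹) = 1 := by
      apply (QuotientGroup.eq_one_iff _).2
      exact Subgroup.subset_normalClosure rfl
    simp only [map_mul, map_zpow, map_inv] at h1
    have h2' : t * b ^ m * t⁻¹ * (b ^ n)⁻¹ = 1 := h1
    exact mul_inv_eq_one.mp h2'
  -- find a nontrivial power of `b` in `Λ`
  set K : Subgroup (Subgroup.zpowers b) := Λ.subgroupOf (Subgroup.zpowers b) with hKdef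
  set k : ℕ := K.index with hkdef
  have hk0 : k ≠ 0 := hfin
  have hbk : b ^ k ∈ Λ := by
    have hk : (⟨b, Subgroup.mem_zpowers b⟩ : Subgroup.zpowers b) ^ k ∈ K :=
      Subgroup.pow_index_mem K _
    rw [Subgroup.mem_subgroupOf] at hk
    simpa using hk
  set c : BS m n := b ^ (m * (k : ℤ)) with hcdef
  have hcΛ : c ∈ Λ := by
    rw [hcdef, mul_comm m ((k : ℤ)), zpow_mul, zpow_natCast]
    exact Subgroup.zpow_mem Λ hbk m
  -- all conjugates of `c` are `c` or `c⁻¹`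
  have conj : ∀ g : BS m n, g * c * g⁻¹ = c ∨ g * c * g⁻¹ = c⁻¹ := by
    intro g
    let S : Subgroup (BS m n) :=
      { carrier := {g | g * c * g⁻¹ = c ∨ g * c * g⁻¹ = c⁻¹}
        one_mem' := Or.inl (by group)
        mul_mem' := by
          intro x y hx hy
          have key : x * y * c * (x * y)⁻¹ = x * (y * c * y⁻¹) * x⁻¹ := by group
          rcases hy with hy | hy
          · rw [Set.mem_setOf_eq, key, hy]; exact hx
          · rw [Set.mem_setOf_eq, key, hy]
            have key2 : x * c⁻¹ * x⁻¹ = (x * c * x⁻¹)⁻¹ := by group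
            rcases hx with hx | hx
            · right; rw [key2, hx]
            · left; rw [key2, hx, inv_inv]
        inv_mem' := by
          intro x hx
          have h1 : x⁻¹ * (x * c * x⁻¹) * x = c := by group
          rcases hx with hx | hx
          · left
            rw [hx] at h1
            rw [inv_inv]
            exact h1
          · right
            rw [hx] at h1
            have h2 : (x⁻¹ * c⁻¹ * x)⁻¹ = c⁻¹ := by rw [h1]
            rw [inv_inv, ← h2]
            group }
    have hg : g ∈ S := by
      apply PresentedGroup.generated_by (BSrel m n) S
      intro j
      cases j with
      | false =>
          left
          show bGen m n * c * (bGen m n)⁻¹ = c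
          rw [← hbdef, hcdef]
          group
      | true =>
          show t * c * t⁻¹ = c ∨ t * c * t⁻¹ = c⁻¹
          have key : t * c * t⁻¹ = b ^ (n * (k : ℤ)) := by
            rw [hcdef, zpow_mul, ← conj_zpow, trel, ← zpow_mul]
          rcases hmn with h | h
          · left; rw [key, hcdef]; congr 1; rw [h]
          · right; rw [key, hcdef, ← zpow_neg]; congr 1; rw [h]; ring
    exact hg
  -- `c ≠ 1` via the homomorphism to the infinite dihedral group
  set f : Bool → DihedralGroup 0 :=
    fun x => Bool.rec (DihedralGroup.r 1) (if n = m then 1 else DihedralGroup.sr 0) x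
    with hfdef
  have hrel : ∀ r ∈ BSrel m n, FreeGroup.lift f r = 1 := by
    intro r hr
    rw [BSrel, Set.mem_singleton_iff] at hr
    subst hr
    have hft : f true = (if n = m then 1 else DihedralGroup.sr 0) := rfl
    have hff : f false = DihedralGroup.r 1 := rfl
    simp only [map_mul, map_zpow, map_inv, FreeGroup.lift_apply_of, hft, hff, dih_r_one_zpow]
    rcases hmn with h | h
    · rw [if_pos h, h]; group
    · have hne : n ≠ m := by omega
      rw [if_neg hne, h, dih_inv_sr]
      have key : ∀ M : ZMod 0, DihedralGroup.sr 0 * DihedralGroup.r M * DihedralGroup.sr 0 *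
          (DihedralGroup.r (-M))⁻¹ = 1 := by
        intro M
        rw [dih_inv_r, DihedralGroup.sr_mul_r,
          DihedralGroup.sr_mul_sr, DihedralGroup.r_mul_r, DihedralGroup.one_def]
        congr 1
        ring
      exact key m
  have hc1 : c ≠ 1 := by
    intro h
    have := congrArg (PresentedGroup.toGroup hrel) h
    rw [hcdef, map_zpow, map_one] at this
    have hfb : PresentedGroup.toGroup hrel b = DihedralGroup.r 1 := by
      rw [hbdef]
      show PresentedGroup.toGroup hrel (PresentedGroup.of false) = _
      exact PresentedGroup.toGroup.of hrel
    rw [hfb, dih_r_one_zpow, DihedralGroup.one_def] at this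
    have h1 := DihedralGroup.r.inj this
    have h0 : m * (k : ℤ) = 0 := by exact_mod_cast h1
    rcases mul_eq_zero.mp h0 with h | h
    · exact hm0 h
    · exact hk0 (by exact_mod_cast h)
  refine ⟨c, hc1, ?_⟩
  intro x
  refine Quotient.inductionOn' x (fun g => ?_)
  show rAct Λ c (Quotient.mk'' g) = Quotient.mk'' g
  rw [rAct, Quotient.map'_mk'']
  apply Quotient.sound'
  rw [QuotientGroup.rightRel_apply]
  have key : g * (g * c)⁻¹ = (g * c * g⁻¹)⁻¹ := by group
  rw [key]
  rcases conj g with h | h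
  · rw [h]; exact Λ.inv_mem hcΛ
  · rw [h, inv_inv]; exact hcΛ
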